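/- For every p ≥ 2 and every t ∈ (0,1), there exists a constant C = C(p,t) > 0 such that for all vectors a, b ∈ ℝ^d, ‖t·a + (1−t)·b‖_p^p ≤ t‖a‖_p^p + (1−t)‖b‖_p^p − (t(1−t)/C)‖a−b‖_p^p. -/
import Mathlib

open Real

private lemma superadd (q : ℝ) (hq : 1 ≤ q) {a b : ℝ} (ha : 0 ≤ a) (hb : 0 ≤ b) :
    a ^ q + b ^ q ≤ (a + b) ^ q := by
  have hq0 : (0:ℝ) ≤ q - 1 := by linarith
  have hab : 0 ≤ a + b := by linarith
  have h1 : a ^ q ≤ a * (a + b) ^ (q - 1) := by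
    calc a ^ q = a ^ ((1:ℝ) + (q - 1)) := by ring_nf
    _ = a ^ (1:ℝ) * a ^ (q - 1) := Real.rpow_add' ha (by linarith)
    _ = a * a ^ (q - 1) := by rw [Real.rpow_one]
    _ ≤ a * (a + b) ^ (q - 1) := by
        gcongr
        linarith
  have h2 : b ^ q ≤ b * (a + b) ^ (q - 1) := by
    calc b ^ q = b ^ ((1:ℝ) + (q - 1)) := by ring_nf
    _ = b ^ (1:ℝ) * b ^ (q - 1) := Real.rpow_add' hb (by linarith)
    _ = b * b ^ (q - 1) := by rw [Real.rpow_one]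
    _ ≤ b * (a + b) ^ (q - 1) := by
        gcongr
        linarith
  calc a ^ q + b ^ q ≤ (a + b) * (a + b) ^ (q - 1) := by linarith
  _ = (a + b) ^ (1:ℝ) * (a + b) ^ (q - 1) := by rw [Real.rpow_one]
  _ = (a + b) ^ ((1:ℝ) + (q - 1)) := (Real.rpow_add' hab (by linarith)).symm
  _ = (a + b) ^ q := by ring_nf

private lemma conv2 (p : ℝ) (hp : 1 ≤ p) {u v w1 w2 : ℝ} (hu : 0 ≤ u) (hv : 0 ≤ v)
    (h1 : 0 ≤ w1) (h2 : 0 ≤ w2) (hw : w1 + w2 = 1) :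
    (w1 * u + w2 * v) ^ p ≤ w1 * u ^ p + w2 * v ^ p := by
  have := (convexOn_rpow hp).2 (Set.mem_Ici.mpr hu) (Set.mem_Ici.mpr hv) h1 h2 hw
  simpa [smul_eq_mul] using this

private lemma absconv (p : ℝ) (hp : 1 ≤ p) {w1 w2 : ℝ} (x y : ℝ)
    (h1 : 0 ≤ w1) (h2 : 0 ≤ w2) (hw : w1 + w2 = 1) :
    |w1 * x + w2 * y| ^ p ≤ w1 * |x| ^ p + w2 * |y| ^ p := by
  have hp0 : (0:ℝ) ≤ p := by linarith
  have habs : |w1 * x + w2 * y| ≤ w1 * |x| + w2 * |y| := by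
    calc |w1 * x + w2 * y| ≤ |w1 * x| + |w2 * y| := abs_add_le _ _
    _ = w1 * |x| + w2 * |y| := by rw [abs_mul, abs_mul, abs_of_nonneg h1, abs_of_nonneg h2]
  calc |w1 * x + w2 * y| ^ p ≤ (w1 * |x| + w2 * |y|) ^ p :=
        Real.rpow_le_rpow (abs_nonneg _) habs hp0
  _ ≤ w1 * |x| ^ p + w2 * |y| ^ p := conv2 p hp (abs_nonneg _) (abs_nonneg _) h1 h2 hw

private lemma sq_rpow_half (p : ℝ) (a : ℝ) : (a ^ 2) ^ (p / 2) = |a| ^ p := by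
  rw [← sq_abs, ← Real.rpow_natCast |a| 2, ← Real.rpow_mul (abs_nonneg a)]
  congr 1
  ring

private lemma clarkson (p : ℝ) (hp : 2 ≤ p) (x y : ℝ) :
    |x + y| ^ p + |x - y| ^ p ≤ 2 ^ (p - 1) * (|x| ^ p + |y| ^ p) := by
  have hp2 : (1:ℝ) ≤ p / 2 := by linarith
  have h1 : |x + y| ^ p + |x - y| ^ p ≤ ((x + y) ^ 2 + (x - y) ^ 2) ^ (p / 2) := by
    rw [← sq_rpow_half p (x + y), ← sq_rpow_half p (x - y)]
    exact superadd _ hp2 (sq_nonneg _) (sq_nonneg _)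
  have h2 : (x + y) ^ 2 + (x - y) ^ 2 = 2 * (2⁻¹ * x ^ 2 + 2⁻¹ * y ^ 2) * 2 := by ring
  have h3 : ((x + y) ^ 2 + (x - y) ^ 2) ^ (p / 2)
      = 2 ^ (p / 2) * (2⁻¹ * x ^ 2 + 2⁻¹ * y ^ 2) ^ (p / 2) * 2 ^ (p / 2) := by
    rw [h2, Real.mul_rpow (by positivity) (by norm_num),
        Real.mul_rpow (by norm_num) (by positivity)]
  have h4 : (2⁻¹ * x ^ 2 + 2⁻¹ * y ^ 2) ^ (p / 2)
      ≤ 2⁻¹ * |x| ^ p + 2⁻¹ * |y| ^ p := by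
    have := conv2 (p / 2) (w1 := 2⁻¹) (w2 := 2⁻¹) hp2 (sq_nonneg x) (sq_nonneg y)
      (by norm_num) (by norm_num) (by norm_num)
    rwa [sq_rpow_half, sq_rpow_half] at this
  have h5 : (2:ℝ) ^ (p / 2) * 2 ^ (p / 2) = 2 ^ p := by
    rw [← Real.rpow_add (by norm_num)]; ring_nf
  have h6 : (2:ℝ) ^ p = 2 * 2 ^ (p - 1) := by
    rw [← Real.rpow_one_add' (by norm_num) (by intro h; nlinarith)]
    ring_nf
  have hpos : (0:ℝ) < 2 ^ (p / 2) := Real.rpow_pos_of_pos (by norm_num) _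
  calc |x + y| ^ p + |x - y| ^ p ≤ ((x + y) ^ 2 + (x - y) ^ 2) ^ (p / 2) := h1
  _ = 2 ^ (p / 2) * 2 ^ (p / 2) * (2⁻¹ * x ^ 2 + 2⁻¹ * y ^ 2) ^ (p / 2) := by rw [h3]; ring
  _ ≤ 2 ^ (p / 2) * 2 ^ (p / 2) * (2⁻¹ * |x| ^ p + 2⁻¹ * |y| ^ p) := by
      apply mul_le_mul_of_nonneg_left h4; positivity
  _ = 2 ^ p * (2⁻¹ * |x| ^ p + 2⁻¹ * |y| ^ p) := by rw [h5]
  _ = 2 ^ (p - 1) * (|x| ^ p + |y| ^ p) := by rw [h6]; ring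

private lemma midpoint_ineq (p : ℝ) (hp : 2 ≤ p) (x y : ℝ) :
    |(x + y) / 2| ^ p ≤ (|x| ^ p + |y| ^ p) / 2 - |x - y| ^ p / 2 ^ p := by
  have h2p : (0:ℝ) < 2 ^ p := Real.rpow_pos_of_pos (by norm_num) _
  have habs : |(x + y) / 2| = |x + y| / 2 := by rw [abs_div]; norm_num
  have hdiv : |(x + y) / 2| ^ p = |x + y| ^ p / 2 ^ p := by
    rw [habs, Real.div_rpow (abs_nonneg _) (by norm_num)]
  have h6 : (2:ℝ) ^ p = 2 * 2 ^ (p - 1) := by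
    rw [← Real.rpow_one_add' (by norm_num) (by intro h; nlinarith)]
    ring_nf
  have hc := clarkson p hp x y
  rw [hdiv, div_le_iff₀ h2p, sub_mul, div_mul_cancel₀ _ (ne_of_gt h2p)]
  calc |x + y| ^ p ≤ 2 ^ (p - 1) * (|x| ^ p + |y| ^ p) - |x - y| ^ p := by linarith
  _ = (|x| ^ p + |y| ^ p) / 2 * 2 ^ p - |x - y| ^ p := by rw [h6]; ring

private lemma key_half (p : ℝ) (hp : 2 ≤ p) {t : ℝ} (h0 : 0 ≤ t) (h12 : t ≤ 1 / 2)
    (x y : ℝ) :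
    |t * x + (1 - t) * y| ^ p ≤
      t * |x| ^ p + (1 - t) * |y| ^ p - (2 * t / 2 ^ p) * |x - y| ^ p := by
  have hp1 : (1:ℝ) ≤ p := by linarith
  have hrw : t * x + (1 - t) * y = 2 * t * ((x + y) / 2) + (1 - 2 * t) * y := by ring
  have h2p : (0:ℝ) < 2 ^ p := Real.rpow_pos_of_pos (by norm_num) _
  have hconv : |t * x + (1 - t) * y| ^ p
      ≤ 2 * t * |(x + y) / 2| ^ p + (1 - 2 * t) * |y| ^ p := by
    rw [hrw]
    exact absconv p hp1 _ _ (by linarith) (by linarith) (by ring)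
  have hmid := midpoint_ineq p hp x y
  have hmul : 2 * t * |(x + y) / 2| ^ p
      ≤ 2 * t * ((|x| ^ p + |y| ^ p) / 2 - |x - y| ^ p / 2 ^ p) := by
    apply mul_le_mul_of_nonneg_left hmid; linarith
  calc |t * x + (1 - t) * y| ^ p
      ≤ 2 * t * ((|x| ^ p + |y| ^ p) / 2 - |x - y| ^ p / 2 ^ p) + (1 - 2 * t) * |y| ^ p := by
        linarith
  _ = t * |x| ^ p + (1 - t) * |y| ^ p - (2 * t / 2 ^ p) * |x - y| ^ p := by ring

private lemma key (p : ℝ) (hp : 2 ≤ p) {t : ℝ} (ht : t ∈ Set.Ioo (0 : ℝ) 1) (x y : ℝ) :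
    |t * x + (1 - t) * y| ^ p ≤
      t * |x| ^ p + (1 - t) * |y| ^ p - (t * (1 - t) / 2 ^ (p - 1)) * |x - y| ^ p := by
  obtain ⟨ht0, ht1⟩ := ht
  have h2p : (0:ℝ) < 2 ^ p := Real.rpow_pos_of_pos (by norm_num) _
  have h6 : (2:ℝ) ^ p = 2 * 2 ^ (p - 1) := by
    rw [← Real.rpow_one_add' (by norm_num) (by intro h; nlinarith)]
    ring_nf
  have h2p1 : (0:ℝ) < 2 ^ (p - 1) := Real.rpow_pos_of_pos (by norm_num) _
  have hxy : (0:ℝ) ≤ |x - y| ^ p := Real.rpow_nonneg (abs_nonneg _) _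
  rcases le_or_gt t (1 / 2) with h | h
  · have := key_half p hp (le_of_lt ht0) h x y
    have hcoef : (t * (1 - t) / 2 ^ (p - 1)) * |x - y| ^ p
        ≤ (2 * t / 2 ^ p) * |x - y| ^ p := by
      apply mul_le_mul_of_nonneg_right _ hxy
      rw [div_le_div_iff₀ h2p1 h2p, h6]
      nlinarith [mul_pos (mul_pos ht0 ht0) h2p1]
    linarith
  · have h12 : 1 - t ≤ 1 / 2 := by linarith
    have := key_half p hp (by linarith : (0:ℝ) ≤ 1 - t) h12 y x
    rw [abs_sub_comm y x] at this
    have heq : (1 - t) * y + (1 - (1 - t)) * x = t * x + (1 - t) * y := by ring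
    rw [heq] at this
    have hcoef : (t * (1 - t) / 2 ^ (p - 1)) * |x - y| ^ p
        ≤ (2 * (1 - t) / 2 ^ p) * |x - y| ^ p := by
      apply mul_le_mul_of_nonneg_right _ hxy
      rw [div_le_div_iff₀ h2p1 h2p, h6]
      nlinarith [mul_pos (mul_pos (sub_pos.mpr ht1) (sub_pos.mpr ht1)) h2p1]
    linarith

theorem stmt2 (p : ℝ) (hp : 2 ≤ p) (t : ℝ) (ht : t ∈ Set.Ioo (0 : ℝ) 1) :
    ∃ C > (0 : ℝ), ∀ (d : ℕ) (a b : Fin d → ℝ),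
      ∑ i, |t * a i + (1 - t) * b i| ^ p ≤
        t * ∑ i, |a i| ^ p + (1 - t) * ∑ i, |b i| ^ p
          - (t * (1 - t) / C) * ∑ i, |a i - b i| ^ p := by
  refine ⟨2 ^ (p - 1), Real.rpow_pos_of_pos (by norm_num) _, fun d a b => ?_⟩
  have hsum : ∑ i, |t * a i + (1 - t) * b i| ^ p ≤
      ∑ i, (t * |a i| ^ p + (1 - t) * |b i| ^ p
        - (t * (1 - t) / 2 ^ (p - 1)) * |a i - b i| ^ p) :=
    Finset.sum_le_sum fun i _ => key p hp ht (a i) (b i)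
  calc ∑ i, |t * a i + (1 - t) * b i| ^ p
      ≤ ∑ i, (t * |a i| ^ p + (1 - t) * |b i| ^ p
        - (t * (1 - t) / 2 ^ (p - 1)) * |a i - b i| ^ p) := hsum
  _ = t * ∑ i, |a i| ^ p + (1 - t) * ∑ i, |b i| ^ p
        - (t * (1 - t) / 2 ^ (p - 1)) * ∑ i, |a i - b i| ^ p := by
      rw [Finset.sum_sub_distrib, Finset.sum_add_distrib, ← Finset.mul_sum, ← Finset.mul_sum,
        ← Finset.mul_sum]
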